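/- arXiv:1908.07845 — 3 statements merged into one kernel-verified Lean document; each statement's English description precedes it below -/
import Mathlib

section
/- Let m ≥ 2, a ∈ (0, 1/m), and let D := log_{1/a} m. For every s ∈ ℂ with Re s ≥ D + ε for some ε > 0 and s bounded away from the set D + (2π/log(1/a)) i ℤ, the series ζ(s) := Σ_{n≥1} (n!)^{-s} (1 − m·a^s)^{-n} converges absolutely; hence ζ defines a holomorphic function on {Re s > D'} ∖ S for any D' > 0 where S is the set of zeros of 1 − m·a^s. -/
open Complex

lemma aux_summable (σ ε : ℝ) (hσ : 0 < σ) (hε : 0 < ε) :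
    Summable fun n : ℕ => ((Nat.factorial (n + 1) : ℝ)) ^ (-σ) * ε⁻¹ ^ (n + 1) := by
  apply summable_of_ratio_norm_eventually_le (r := 1/2) (by norm_num)
  have h0 : Filter.Tendsto (fun n : ℕ => ((n : ℝ) + 2) ^ (-σ)) Filter.atTop (nhds 0) := by
    have := (tendsto_rpow_neg_atTop hσ).comp
      (Filter.tendsto_atTop_add_const_right Filter.atTop 2 tendsto_natCast_atTop_atTop)
    exact this
  have hev : ∀ᶠ n : ℕ in Filter.atTop, ((n : ℝ) + 2) ^ (-σ) ≤ ε / 2 := by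
    exact h0.eventually (eventually_le_nhds (by positivity))
  filter_upwards [hev] with n hn
  simp only [show n + 1 + 1 = n + 2 from rfl]
  have hfac : (0:ℝ) < (Nat.factorial (n + 1) : ℝ) := by positivity
  have hfac2 : ((Nat.factorial (n + 2) : ℝ)) = ((n:ℝ) + 2) * (Nat.factorial (n + 1) : ℝ) := by
    rw [show n + 2 = (n+1) + 1 from rfl, Nat.factorial_succ]; push_cast; ring
  have hmul : ((Nat.factorial (n + 2) : ℝ)) ^ (-σ)
      = ((n:ℝ) + 2) ^ (-σ) * ((Nat.factorial (n + 1) : ℝ)) ^ (-σ) := by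
    rw [hfac2, Real.mul_rpow (by positivity) (le_of_lt hfac)]
  have hA : (0:ℝ) ≤ ((Nat.factorial (n + 2) : ℝ)) ^ (-σ) * ε⁻¹ ^ (n + 2) := by positivity
  have hB : (0:ℝ) ≤ ((Nat.factorial (n + 1) : ℝ)) ^ (-σ) * ε⁻¹ ^ (n + 1) := by positivity
  rw [Real.norm_eq_abs, Real.norm_eq_abs, _root_.abs_of_nonneg hA, _root_.abs_of_nonneg hB, hmul]
  have : ε⁻¹ ^ (n + 2) = ε⁻¹ * ε⁻¹ ^ (n + 1) := by ring
  rw [this]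
  have hb : (0:ℝ) < ((Nat.factorial (n + 1) : ℝ)) ^ (-σ) * ε⁻¹ ^ (n + 1) := by positivity
  calc ((n:ℝ) + 2) ^ (-σ) * ((Nat.factorial (n + 1) : ℝ)) ^ (-σ) * (ε⁻¹ * ε⁻¹ ^ (n + 1))
      = (((n:ℝ) + 2) ^ (-σ) * ε⁻¹) * (((Nat.factorial (n + 1) : ℝ)) ^ (-σ) * ε⁻¹ ^ (n + 1)) := by ring
    _ ≤ (1/2) * (((Nat.factorial (n + 1) : ℝ)) ^ (-σ) * ε⁻¹ ^ (n + 1)) := by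
        apply mul_le_mul_of_nonneg_right _ (le_of_lt hb)
        rw [div_eq_mul_inv, one_mul]
        calc ((n:ℝ) + 2) ^ (-σ) * ε⁻¹ ≤ (ε/2) * ε⁻¹ :=
              mul_le_mul_of_nonneg_right hn (by positivity)
          _ = 2⁻¹ := by field_simp

lemma aux_abs_term (a : ℝ) (ha : 0 < a) (m : ℕ) (s : ℂ) (n : ℕ) :
    ‖((Nat.factorial (n + 1) : ℂ)) ^ (-s) *
        ((1 - (m : ℂ) * ((a : ℝ) : ℂ) ^ s)⁻¹) ^ (n + 1)‖
    = ((Nat.factorial (n + 1) : ℝ)) ^ (-s.re)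
        * ((‖1 - (m : ℂ) * ((a : ℝ) : ℂ) ^ s‖)⁻¹) ^ (n + 1) := by
  rw [norm_mul, norm_pow, norm_inv]
  congr 1
  have hpos : (0:ℝ) < (Nat.factorial (n + 1) : ℝ) := by positivity
  rw [show ((Nat.factorial (n + 1) : ℂ)) = (((Nat.factorial (n + 1) : ℝ)) : ℂ) by push_cast; rfl,
    Complex.norm_cpow_eq_rpow_re_of_pos hpos]
  simp

/-- The series `ζ(s) = Σ_{n≥1} (n!)^{-s} (1 − m a^s)^{-n}` converges absolutely for
`Re s > 0` whenever `|1 − m a^s|` is bounded below by some `ε > 0`; hence it defines a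
holomorphic function on `{Re s > D'} ∖ S` for any `D' > 0`, where `S` is the set of
zeros of `1 − m a^s`. -/
theorem zeta_infinite_order_convergence (m : ℕ) (hm : 2 ≤ m) (a : ℝ)
    (ha : 0 < a) (ham : a < 1 / m) :
    (∀ s : ℂ, 0 < s.re → ∀ ε : ℝ, 0 < ε →
      ε ≤ ‖1 - (m : ℂ) * ((a : ℝ) : ℂ) ^ s‖ →
      Summable fun n : ℕ => ‖
        (((Nat.factorial (n + 1) : ℂ)) ^ (-s) *
          ((1 - (m : ℂ) * ((a : ℝ) : ℂ) ^ s)⁻¹) ^ (n + 1))‖) ∧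
    (∀ D' : ℝ, 0 < D' →
      DifferentiableOn ℂ
        (fun s : ℂ => ∑' n : ℕ, ((Nat.factorial (n + 1) : ℂ)) ^ (-s) *
          ((1 - (m : ℂ) * ((a : ℝ) : ℂ) ^ s)⁻¹) ^ (n + 1))
        ({s : ℂ | D' < s.re} \ {s : ℂ | 1 - (m : ℂ) * ((a : ℝ) : ℂ) ^ s = 0})) := by
  constructor
  · intro s hs ε hε hεle
    refine Summable.of_nonneg_of_le (fun n => by positivity) ?_ (aux_summable s.re ε hs hε)
    intro n
    rw [aux_abs_term a ha m s n]
    apply mul_le_mul_of_nonneg_left _ (by positivity)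
    apply pow_le_pow_left₀ (by positivity)
    exact inv_anti₀ hε hεle
  · intro D' hD'
    set g : ℂ → ℂ := fun s => 1 - (m : ℂ) * ((a : ℝ) : ℂ) ^ s with hg
    have hacast : ((a : ℝ) : ℂ) ≠ 0 := by
      simpa using ne_of_gt ha
    have hgcont : Continuous g := by
      apply Continuous.sub continuous_const
      exact continuous_const.mul (continuous_id.const_cpow (Or.inl hacast))
    have hgdiff : Differentiable ℂ g := by
      apply Differentiable.sub (differentiable_const _)
      exact (differentiable_const _).mul
        (fun z => (differentiableAt_id.const_cpow (Or.inl hacast)))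
    set U : Set ℂ := {s : ℂ | D' < s.re} \ {s : ℂ | g s = 0} with hU
    intro x hx
    have hxre : D' < x.re := hx.1
    have hgx : g x ≠ 0 := hx.2
    set ε0 : ℝ := ‖g x‖ with hε0
    have hε0pos : 0 < ε0 := by simpa [hε0] using hgx
    -- open neighborhood
    set V : Set ℂ := {s : ℂ | D' < s.re} ∩ {s : ℂ | ε0 / 2 < ‖g s‖} with hV
    have hVopen : IsOpen V := by
      apply IsOpen.inter
      · exact isOpen_lt continuous_const Complex.continuous_re
      · exact isOpen_lt continuous_const (continuous_norm.comp hgcont)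
    have hxV : x ∈ V := ⟨hxre, half_lt_self hε0pos⟩
    have hdiff : DifferentiableOn ℂ
        (fun s : ℂ => ∑' n : ℕ, ((Nat.factorial (n + 1) : ℂ)) ^ (-s) *
          ((g s)⁻¹) ^ (n + 1)) V := by
      apply differentiableOn_tsum_of_summable_norm
        (u := fun n : ℕ => ((Nat.factorial (n + 1) : ℝ)) ^ (-D') * (ε0 / 2)⁻¹ ^ (n + 1))
        (aux_summable D' (ε0 / 2) hD' (by positivity))
      · intro n
        apply DifferentiableOn.mul
        · intro z hz
          exact ((differentiableAt_id.neg.const_cpow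
            (Or.inl (by exact_mod_cast (Nat.factorial_pos (n+1)).ne'))).differentiableWithinAt)
        · intro z hz
          have hz2 : g z ≠ 0 := by
            have h2 : ε0 / 2 < ‖g z‖ := hz.2
            intro h
            rw [h] at h2
            simp at h2
            linarith
          exact ((((hgdiff z).inv hz2).pow (n+1)).differentiableWithinAt)
      · exact hVopen
      · intro n w hw
        have hw1 : D' < w.re := hw.1
        have hw2 : ε0 / 2 < ‖g w‖ := hw.2
        rw [show ‖((Nat.factorial (n + 1) : ℂ)) ^ (-w) * ((g w)⁻¹) ^ (n + 1)‖
            = ‖((Nat.factorial (n + 1) : ℂ)) ^ (-w) * ((g w)⁻¹) ^ (n + 1)‖ from rfl,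
          aux_abs_term a ha m w n]
        apply mul_le_mul
        · apply Real.rpow_le_rpow_of_exponent_le
          · exact_mod_cast Nat.one_le_iff_ne_zero.mpr (Nat.factorial_pos (n+1)).ne'
          · linarith
        · apply pow_le_pow_left₀ (by positivity)
          exact inv_anti₀ (by positivity) (le_of_lt hw2)
        · positivity
        · positivity
    have := (hdiff.differentiableAt (hVopen.mem_nhds hxV)).differentiableWithinAt
      (s := U)
    exact this
end

section
/- Let k₀ ≥ 1 and suppose U ⊆ ℂ is an open disk whose closure satisfies D_{k₀+1} < inf_{s∈U} Re s ≤ sup_{s∈U} Re s < D_{k₀}, where (D_k) is a strictly decreasing sequence and a_k := m_k^{-1/D_k} with integers m_k ≥ 2 strictly increasing. Then there exists ε > 0 such that |1 − m_k·a_k^s| ≥ ε for all s ∈ U and all k ≥ 1. -/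
open Complex

/-- Let `(D_k)` be a strictly decreasing sequence of positive reals, `(m_k)` a strictly
increasing sequence of integers with `m_0 ≥ 2`, and `a_k := m_k^{-1/D_k}`.  If `U` is an
open disk whose real parts satisfy `D_{k₀+1} < inf_{s∈U} Re s ≤ sup_{s∈U} Re s < D_{k₀}`,
then there is `ε > 0` with `|1 − m_k a_k^s| ≥ ε` for all `s ∈ U` and all `k`. -/
theorem uniform_lower_bound_on_strip (D : ℕ → ℝ) (hDanti : StrictAnti D)
    (hDpos : ∀ k, 0 < D k)
    (m : ℕ → ℕ) (hmmono : StrictMono m) (hm0 : 2 ≤ m 0)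
    (k₀ : ℕ) (c : ℂ) (r : ℝ) (hr : 0 < r)
    (U : Set ℂ) (hU : U = Metric.ball c r)
    (lo hi : ℝ) (hlo : D (k₀ + 1) < lo) (hhi : hi < D k₀)
    (hbounds : ∀ s ∈ U, lo ≤ s.re ∧ s.re ≤ hi) :
    ∃ ε : ℝ, 0 < ε ∧ ∀ s ∈ U, ∀ k : ℕ,
      ε ≤ ‖
        (1 - (m k : ℂ) * (((m k : ℝ) ^ (-(1 / D k)) : ℝ) : ℂ) ^ s)‖ := by
  have hm2 : ∀ k, (2:ℝ) ≤ (m k : ℝ) := fun k => by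
    have : 2 ≤ m k := le_trans hm0 (hmmono.monotone (Nat.zero_le k))
    exact_mod_cast this
  have hm1 : ∀ k, (1:ℝ) < (m k : ℝ) := fun k => lt_of_lt_of_le one_lt_two (hm2 k)
  have hm0' : ∀ k, (0:ℝ) < (m k : ℝ) := fun k => lt_trans one_pos (hm1 k)
  have hcU : c ∈ U := by rw [hU]; exact Metric.mem_ball_self hr
  have hlh : lo ≤ hi := le_trans (hbounds c hcU).1 (hbounds c hcU).2
  have hlopos : 0 < lo := lt_trans (hDpos _) hlo
  have hhipos : 0 < hi := lt_of_lt_of_le hlopos hlh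
  set δ : ℝ := 1 - hi / D k₀ with hδ
  have hδpos : 0 < δ := by
    rw [hδ, sub_pos, div_lt_one (hDpos k₀)]; exact hhi
  set E : ℝ := 1 - lo / D (k₀ + 1) with hE
  have hEneg : E < 0 := by
    rw [hE, sub_neg, lt_div_iff₀ (hDpos (k₀+1)), one_mul]; exact hlo
  set c1 : ℝ := (m (k₀+1) : ℝ) ^ E with hc1
  have hc1pos : 0 < c1 := Real.rpow_pos_of_pos (hm0' _) _
  have hc1lt : c1 < 1 := Real.rpow_lt_one_of_one_lt_of_neg (hm1 _) hEneg
  have hε1 : (0:ℝ) < (2:ℝ) ^ δ - 1 := by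
    have : (1:ℝ) < (2:ℝ) ^ δ :=
      Real.one_lt_rpow_iff_of_pos two_pos |>.2 (Or.inl ⟨one_lt_two, hδpos⟩)
    linarith
  refine ⟨min ((2:ℝ)^δ - 1) (1 - c1), lt_min hε1 (by linarith), ?_⟩
  intro s hs k
  obtain ⟨hsl, hsu⟩ := hbounds s hs
  -- compute the modulus of the product
  have habs : ‖(m k : ℂ) * (((m k : ℝ) ^ (-(1 / D k)) : ℝ) : ℂ) ^ s‖
      = (m k : ℝ) ^ (1 - s.re / D k) := by
    have hbpos : (0:ℝ) < (m k : ℝ) ^ (-(1 / D k)) := Real.rpow_pos_of_pos (hm0' k) _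
    rw [norm_mul, Complex.norm_cpow_eq_rpow_re_of_pos hbpos, Complex.norm_natCast,
      ← Real.rpow_mul (hm0' k).le]
    nth_rewrite 1 [← Real.rpow_one ((m k : ℝ))]
    rw [← Real.rpow_add (hm0' k)]
    congr 1
    ring
  -- lower bound by | |z| - 1 |
  have hkey : |(m k : ℝ) ^ (1 - s.re / D k) - 1|
      ≤ ‖1 - (m k : ℂ) * (((m k : ℝ) ^ (-(1 / D k)) : ℝ) : ℂ) ^ s‖ := by
    have := abs_norm_sub_norm_le
      ((m k : ℂ) * (((m k : ℝ) ^ (-(1 / D k)) : ℝ) : ℂ) ^ s) 1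
    rw [habs, norm_one] at this
    calc |(m k : ℝ) ^ (1 - s.re / D k) - 1|
        ≤ ‖(m k : ℂ) * (((m k : ℝ) ^ (-(1 / D k)) : ℝ) : ℂ) ^ s - 1‖ := this
      _ = ‖1 - (m k : ℂ) * (((m k : ℝ) ^ (-(1 / D k)) : ℝ) : ℂ) ^ s‖ := by
          exact norm_sub_rev _ _
  refine le_trans ?_ hkey
  rcases le_or_gt k k₀ with hk | hk
  · -- k ≤ k₀ : exponent ≥ δ, value ≥ 2^δ > 1
    have hDk : D k₀ ≤ D k := hDanti.antitone hk
    have hexp : δ ≤ 1 - s.re / D k := by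
      have h1 : s.re / D k ≤ hi / D k := by gcongr; exact hDpos k |>.le
      have h2 : hi / D k ≤ hi / D k₀ := by gcongr; exact hDpos k₀
      rw [hδ]; linarith
    have hval : (2:ℝ) ^ δ ≤ (m k : ℝ) ^ (1 - s.re / D k) := by
      calc (2:ℝ) ^ δ ≤ (m k : ℝ) ^ δ :=
            Real.rpow_le_rpow (by norm_num) (hm2 k) hδpos.le
        _ ≤ (m k : ℝ) ^ (1 - s.re / D k) :=
            Real.rpow_le_rpow_of_exponent_le (hm1 k).le hexp
    have : (2:ℝ) ^ δ - 1 ≤ |(m k : ℝ) ^ (1 - s.re / D k) - 1| := by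
      rw [_root_.abs_of_nonneg (by linarith)]; linarith
    exact le_trans (min_le_left _ _) this
  · -- k ≥ k₀ + 1 : exponent ≤ E < 0, value ≤ c1 < 1
    have hk' : k₀ + 1 ≤ k := hk
    have hDk : D k ≤ D (k₀ + 1) := hDanti.antitone hk'
    have hexp : 1 - s.re / D k ≤ E := by
      have h1 : lo / D k ≤ s.re / D k := by gcongr; exact hDpos k |>.le
      have h2 : lo / D (k₀+1) ≤ lo / D k := by gcongr; exact hDpos k
      rw [hE]; linarith
    have hval : (m k : ℝ) ^ (1 - s.re / D k) ≤ c1 := by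
      calc (m k : ℝ) ^ (1 - s.re / D k) ≤ (m k : ℝ) ^ E :=
            Real.rpow_le_rpow_of_exponent_le (hm1 k).le hexp
        _ ≤ (m (k₀+1) : ℝ) ^ E := by
            apply Real.rpow_le_rpow_of_nonpos (hm0' (k₀+1)) ?_ hEneg.le
            exact_mod_cast hmmono.monotone hk'
    have hvpos : (0:ℝ) < (m k : ℝ) ^ (1 - s.re / D k) := Real.rpow_pos_of_pos (hm0' k) _
    have : 1 - c1 ≤ |(m k : ℝ) ^ (1 - s.re / D k) - 1| := by
      rw [_root_.abs_of_nonpos (by linarith)]; linarith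
    exact le_trans (min_le_right _ _) this
end

section
/- Shift property of distance zeta functions: Let L = (ℓ_j) be a bounded fractal string with canonical geometric realization A_L := {a_k := Σ_{j≥k} ℓ_j : k ∈ ℕ} ⊂ [0, a₁], and let N ≥ 2 and δ > ℓ₁/2. Then the contribution of the region V₁ := [0,a₁] × [0,1]^{N−1} to the distance zeta function of A' := A_L × [0,1]^{N−1} ⊂ ℝ^N equals ∫_{V₁} d(x, A')^{s−N} dx = (2^{N−s}/(s − N + 1))·ζ_L(s − N + 1), for all s ∈ ℂ with Re s > N − 1 + D(ζ_L). -/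
open Complex Set
open MeasureTheory intervalIntegral

lemma aux_le_infDist {α : Type*} [PseudoMetricSpace α] {s : Set α} {x : α} {b : ℝ}
    (hs : s.Nonempty) (h : ∀ y ∈ s, b ≤ dist x y) : b ≤ Metric.infDist x s := by
  by_contra hlt
  push_neg at hlt
  obtain ⟨y, hy, hd⟩ := (Metric.infDist_lt_iff hs).1 hlt
  exact absurd (h y hy) (not_le.2 hd)

lemma aux_min_eq_left {c d t : ℝ} (ht : t ∈ Set.Ioc c ((c + d) / 2)) :
    min (t - c) (d - t) = t - c := by
  rcases ht with ⟨h1, h2⟩; apply min_eq_left; linarith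

lemma aux_min_eq_right {c d t : ℝ} (ht : t ∈ Set.Ioc ((c + d) / 2) d) :
    min (t - c) (d - t) = d - t := by
  rcases ht with ⟨h1, h2⟩; apply min_eq_right; linarith

lemma min_cpow_integrableOn {c d : ℝ} (h : c < d) {r : ℂ} (hr : -1 < r.re) :
    IntegrableOn (fun t => ((min (t - c) (d - t) : ℝ) : ℂ) ^ r) (Set.Ioc c d) := by
  set m := (c + d) / 2 with hm
  have hcm : c ≤ m := by rw [hm]; linarith
  have hmd : m ≤ d := by rw [hm]; linarith
  have h1 : IntegrableOn (fun t => ((t - c : ℝ) : ℂ) ^ r) (Set.Ioc c m) := by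
    have := (intervalIntegrable_cpow' (a := 0) (b := m - c) hr).comp_sub_right c
    rw [zero_add, sub_add_cancel] at this
    exact this.1
  have h2 : IntegrableOn (fun t => ((d - t : ℝ) : ℂ) ^ r) (Set.Ioc m d) := by
    have := (intervalIntegrable_cpow' (a := d - m) (b := 0) hr).comp_sub_left d
    rw [sub_zero, sub_sub_cancel] at this
    exact this.1
  have eq1 : Set.EqOn (fun t : ℝ => ((t - c : ℝ) : ℂ) ^ r)
      (fun t : ℝ => ((min (t - c) (d - t) : ℝ) : ℂ) ^ r) (Set.Ioc c m) :=
    fun t ht => by simp only [aux_min_eq_left ht]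
  have eq2 : Set.EqOn (fun t : ℝ => ((d - t : ℝ) : ℂ) ^ r)
      (fun t : ℝ => ((min (t - c) (d - t) : ℝ) : ℂ) ^ r) (Set.Ioc m d) :=
    fun t ht => by simp only [aux_min_eq_right ht]
  have := (h1.congr_fun eq1 measurableSet_Ioc).union
    (h2.congr_fun eq2 measurableSet_Ioc)
  rwa [Set.Ioc_union_Ioc_eq_Ioc hcm hmd] at this

lemma min_cpow_integral {c d : ℝ} (h : c < d) {r : ℂ} (hr : -1 < r.re) :
    ∫ t in Set.Ioc c d, ((min (t - c) (d - t) : ℝ) : ℂ) ^ r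
      = 2 * (((d - c) / 2 : ℝ) : ℂ) ^ (r + 1) / (r + 1) := by
  set m := (c + d) / 2 with hm
  have hcm : c ≤ m := by rw [hm]; linarith
  have hmd : m ≤ d := by rw [hm]; linarith
  have hr1 : r + 1 ≠ 0 := by
    intro hr0
    have : (r + 1).re = 0 := by rw [hr0]; simp
    simp only [Complex.add_re, Complex.one_re] at this
    linarith
  have h1 : IntegrableOn (fun t => ((t - c : ℝ) : ℂ) ^ r) (Set.Ioc c m) := by
    have := (intervalIntegrable_cpow' (a := 0) (b := m - c) hr).comp_sub_right c
    rw [zero_add, sub_add_cancel] at this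
    exact this.1
  have h2 : IntegrableOn (fun t => ((d - t : ℝ) : ℂ) ^ r) (Set.Ioc m d) := by
    have := (intervalIntegrable_cpow' (a := d - m) (b := 0) hr).comp_sub_left d
    rw [sub_zero, sub_sub_cancel] at this
    exact this.1
  have eq1 : Set.EqOn (fun t : ℝ => ((t - c : ℝ) : ℂ) ^ r)
      (fun t : ℝ => ((min (t - c) (d - t) : ℝ) : ℂ) ^ r) (Set.Ioc c m) :=
    fun t ht => by simp only [aux_min_eq_left ht]
  have eq2 : Set.EqOn (fun t : ℝ => ((d - t : ℝ) : ℂ) ^ r)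
      (fun t : ℝ => ((min (t - c) (d - t) : ℝ) : ℂ) ^ r) (Set.Ioc m d) :=
    fun t ht => by simp only [aux_min_eq_right ht]
  have key : ∀ b : ℝ, 0 ≤ b → ∫ x in (0:ℝ)..b, ((x : ℝ) : ℂ) ^ r = (b : ℂ) ^ (r + 1) / (r + 1) := by
    intro b hb
    rw [integral_cpow (Or.inl hr)]
    rw [Complex.ofReal_zero, Complex.zero_cpow hr1, sub_zero]
  have e1 : ∫ t in Set.Ioc c m, ((min (t - c) (d - t) : ℝ) : ℂ) ^ r
      = (((d - c) / 2 : ℝ) : ℂ) ^ (r + 1) / (r + 1) := by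
    rw [setIntegral_congr_fun measurableSet_Ioc eq1.symm, ← intervalIntegral.integral_of_le hcm,
      intervalIntegral.integral_comp_sub_right (fun u => ((u : ℝ) : ℂ) ^ r) c, sub_self]
    have : m - c = (d - c) / 2 := by rw [hm]; ring
    rw [this, key _ (by linarith)]
  have e2 : ∫ t in Set.Ioc m d, ((min (t - c) (d - t) : ℝ) : ℂ) ^ r
      = (((d - c) / 2 : ℝ) : ℂ) ^ (r + 1) / (r + 1) := by
    rw [setIntegral_congr_fun measurableSet_Ioc eq2.symm, ← intervalIntegral.integral_of_le hmd,
      intervalIntegral.integral_comp_sub_left (fun u => ((u : ℝ) : ℂ) ^ r) d, sub_self]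
    have : d - m = (d - c) / 2 := by rw [hm]; ring
    rw [this, key _ (by linarith)]
  calc ∫ t in Set.Ioc c d, ((min (t - c) (d - t) : ℝ) : ℂ) ^ r
      = ∫ t in Set.Ioc c m ∪ Set.Ioc m d, ((min (t - c) (d - t) : ℝ) : ℂ) ^ r := by
        rw [Set.Ioc_union_Ioc_eq_Ioc hcm hmd]
    _ = _ := by
        rw [setIntegral_union (Set.Ioc_disjoint_Ioc_of_le le_rfl) measurableSet_Ioc
          (h1.congr_fun eq1 measurableSet_Ioc)
          (h2.congr_fun eq2 measurableSet_Ioc), e1, e2]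
        ring

lemma min_rpow_integral {c d : ℝ} (h : c < d) {ρ : ℝ} (hρ : -1 < ρ) :
    ∫ t in Set.Ioc c d, (min (t - c) (d - t)) ^ ρ
      = 2 * ((d - c) / 2) ^ (ρ + 1) / (ρ + 1) := by
  set m := (c + d) / 2 with hm
  have hcm : c ≤ m := by rw [hm]; linarith
  have hmd : m ≤ d := by rw [hm]; linarith
  have h1 : IntegrableOn (fun t => (t - c) ^ ρ) (Set.Ioc c m) := by
    have := (intervalIntegrable_rpow' (a := 0) (b := m - c) hρ).comp_sub_right c
    rw [zero_add, sub_add_cancel] at this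
    exact this.1
  have h2 : IntegrableOn (fun t => (d - t) ^ ρ) (Set.Ioc m d) := by
    have := (intervalIntegrable_rpow' (a := d - m) (b := 0) hρ).comp_sub_left d
    rw [sub_zero, sub_sub_cancel] at this
    exact this.1
  have eq1 : Set.EqOn (fun t : ℝ => (t - c) ^ ρ)
      (fun t : ℝ => (min (t - c) (d - t)) ^ ρ) (Set.Ioc c m) :=
    fun t ht => by simp only [aux_min_eq_left ht]
  have eq2 : Set.EqOn (fun t : ℝ => (d - t) ^ ρ)
      (fun t : ℝ => (min (t - c) (d - t)) ^ ρ) (Set.Ioc m d) :=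
    fun t ht => by simp only [aux_min_eq_right ht]
  have key : ∀ b : ℝ, ∫ x in (0:ℝ)..b, x ^ ρ = b ^ (ρ + 1) / (ρ + 1) := by
    intro b
    rw [integral_rpow (Or.inl hρ), Real.zero_rpow (by linarith), sub_zero]
  have e1 : ∫ t in Set.Ioc c m, (min (t - c) (d - t)) ^ ρ
      = ((d - c) / 2) ^ (ρ + 1) / (ρ + 1) := by
    rw [setIntegral_congr_fun measurableSet_Ioc eq1.symm, ← intervalIntegral.integral_of_le hcm,
      intervalIntegral.integral_comp_sub_right (fun u => u ^ ρ) c, sub_self]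
    have : m - c = (d - c) / 2 := by rw [hm]; ring
    rw [this, key]
  have e2 : ∫ t in Set.Ioc m d, (min (t - c) (d - t)) ^ ρ
      = ((d - c) / 2) ^ (ρ + 1) / (ρ + 1) := by
    rw [setIntegral_congr_fun measurableSet_Ioc eq2.symm, ← intervalIntegral.integral_of_le hmd,
      intervalIntegral.integral_comp_sub_left (fun u => u ^ ρ) d, sub_self]
    have : d - m = (d - c) / 2 := by rw [hm]; ring
    rw [this, key]
  calc ∫ t in Set.Ioc c d, (min (t - c) (d - t)) ^ ρ
      = ∫ t in Set.Ioc c m ∪ Set.Ioc m d, (min (t - c) (d - t)) ^ ρ := by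
        rw [Set.Ioc_union_Ioc_eq_Ioc hcm hmd]
    _ = _ := by
        rw [setIntegral_union (Set.Ioc_disjoint_Ioc_of_le le_rfl) measurableSet_Ioc
          (h1.congr_fun eq1 measurableSet_Ioc)
          (h2.congr_fun eq2 measurableSet_Ioc), e1, e2]
        ring

lemma infDist_interval {R : Set ℝ} {c d t : ℝ} (hc : c ∈ R) (hd : d ∈ R)
    (hgap : ∀ y ∈ R, y ≤ c ∨ d ≤ y) (ht : t ∈ Set.Icc c d) :
    Metric.infDist t R = min (t - c) (d - t) := by
  rcases ht with ⟨h1, h2⟩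
  refine le_antisymm (le_min ?_ ?_) ?_
  · calc Metric.infDist t R ≤ dist t c := Metric.infDist_le_dist_of_mem hc
      _ = t - c := by rw [Real.dist_eq, _root_.abs_of_nonneg (by linarith)]
  · calc Metric.infDist t R ≤ dist t d := Metric.infDist_le_dist_of_mem hd
      _ = d - t := by rw [Real.dist_eq, _root_.abs_of_nonpos (by linarith), neg_sub]
  · refine aux_le_infDist ⟨c, hc⟩ fun y hy => ?_
    rw [Real.dist_eq]
    rcases hgap y hy with h | h
    · calc min (t - c) (d - t) ≤ t - c := min_le_left _ _
        _ ≤ t - y := by linarith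
        _ ≤ |t - y| := le_abs_self _
    · calc min (t - c) (d - t) ≤ d - t := min_le_right _ _
        _ ≤ y - t := by linarith
        _ ≤ |t - y| := by rw [abs_sub_comm]; exact le_abs_self _

lemma infDist_eq_of_lateral {n : ℕ} (a : ℕ → ℝ)
    (x : EuclideanSpace ℝ (Fin (n + 1))) (hx : ∀ i, i ≠ 0 → x i ∈ Set.Icc (0:ℝ) 1) :
    Metric.infDist x {z : EuclideanSpace ℝ (Fin (n + 1)) |
        (∃ k, z 0 = a k) ∧ ∀ i, i ≠ 0 → z i ∈ Set.Icc (0:ℝ) 1}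
      = Metric.infDist (x 0) (Set.range a) := by
  set A : Set (EuclideanSpace ℝ (Fin (n + 1))) :=
    {z | (∃ k, z 0 = a k) ∧ ∀ i, i ≠ 0 → z i ∈ Set.Icc (0:ℝ) 1} with hA
  have hyk : ∀ k : ℕ, (WithLp.toLp 2 (Function.update x 0 (a k)) : EuclideanSpace ℝ (Fin (n + 1))) ∈ A := by
    intro k
    constructor
    · exact ⟨k, Function.update_self 0 (a k) x⟩
    · intro i hi
      rw [WithLp.ofLp_toLp, Function.update_of_ne hi]
      exact hx i hi
  have hdistyk : ∀ k : ℕ,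
      dist x (WithLp.toLp 2 (Function.update x 0 (a k)) : EuclideanSpace ℝ (Fin (n + 1))) = dist (x 0) (a k) := by
    intro k
    rw [EuclideanSpace.dist_eq]; simp only [WithLp.ofLp_toLp]
    rw [Finset.sum_eq_single_of_mem 0 (Finset.mem_univ 0)
      (fun i _ hi => by rw [Function.update_of_ne hi, dist_self]; ring)]
    rw [Function.update_self]
    exact Real.sqrt_sq dist_nonneg
  have hAne : A.Nonempty := ⟨_, hyk 0⟩
  have hfst : ∀ z : EuclideanSpace ℝ (Fin (n + 1)), dist (x 0) (z 0) ≤ dist x z := by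
    intro z
    rw [EuclideanSpace.dist_eq]
    have : dist (x 0) (z 0) ^ 2 ≤ ∑ i, dist (x i) (z i) ^ 2 :=
      Finset.single_le_sum (f := fun i : Fin (n+1) => dist (x i) (z i) ^ 2) (fun i _ => sq_nonneg _) (Finset.mem_univ 0)
    calc dist (x 0) (z 0) = Real.sqrt (dist (x 0) (z 0) ^ 2) := (Real.sqrt_sq dist_nonneg).symm
      _ ≤ _ := Real.sqrt_le_sqrt this
  refine le_antisymm ?_ ?_
  · refine aux_le_infDist (Set.range_nonempty a) fun y hy => ?_
    obtain ⟨k, rfl⟩ := hy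
    rw [← hdistyk k]
    exact Metric.infDist_le_dist_of_mem (hyk k)
  · refine aux_le_infDist hAne fun z hz => ?_
    obtain ⟨⟨k, hk⟩, -⟩ := hz
    calc Metric.infDist (x 0) (Set.range a) ≤ dist (x 0) (z 0) := by
          rw [hk]; exact Metric.infDist_le_dist_of_mem ⟨k, rfl⟩
      _ ≤ dist x z := hfst z

lemma euclidean_reduction {n : ℕ} (g : ℝ → ℂ) (b : ℝ) :
    ∫ x in {x : EuclideanSpace ℝ (Fin (n + 1)) |
        x 0 ∈ Set.Icc 0 b ∧ ∀ i, i ≠ 0 → x i ∈ Set.Icc (0:ℝ) 1}, g (x 0)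
      = ∫ t in Set.Icc 0 b, g t := by
  set S : Set (Fin (n + 1) → ℝ) :=
    {y | y 0 ∈ Set.Icc 0 b ∧ ∀ i, i ≠ 0 → y i ∈ Set.Icc (0:ℝ) 1} with hS
  set T : Set (ℝ × (Fin n → ℝ)) :=
    (Set.Icc 0 b) ×ˢ (Set.univ.pi fun _ : Fin n => Set.Icc (0:ℝ) 1) with hT
  have step1 : ∫ x in {x : EuclideanSpace ℝ (Fin (n + 1)) |
        x 0 ∈ Set.Icc 0 b ∧ ∀ i, i ≠ 0 → x i ∈ Set.Icc (0:ℝ) 1}, g (x 0)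
      = ∫ y in S, g (y 0) :=
    (EuclideanSpace.volume_preserving_symm_measurableEquiv_toLp (Fin (n + 1))).setIntegral_preimage_emb
      (MeasurableEquiv.toLp 2 (Fin (n + 1) → ℝ)).symm.measurableEmbedding (fun y => g (y 0)) S
  have hpre : S = (MeasurableEquiv.piFinSuccAbove (fun _ : Fin (n + 1) => ℝ) 0) ⁻¹' T := by
    ext y
    simp only [hS, hT, Set.mem_setOf_eq, Set.mem_preimage, MeasurableEquiv.piFinSuccAbove,
      MeasurableEquiv.piFinSuccAbove_apply, Fin.insertNthEquiv_symm_apply, Set.mem_prod, Set.mem_pi,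
      Set.mem_univ, forall_true_left, Fin.removeNth, Fin.zero_succAbove]
    constructor
    · rintro ⟨h0, hrest⟩
      exact ⟨h0, fun j => hrest j.succ (Fin.succ_ne_zero j)⟩
    · rintro ⟨h0, hrest⟩
      refine ⟨h0, fun i hi => ?_⟩
      obtain ⟨j, rfl⟩ := Fin.eq_succ_of_ne_zero hi
      exact hrest j
  have step2 : ∫ y in S, g (y 0) = ∫ p in T, g p.1 := by
    rw [hpre]
    exact (volume_preserving_piFinSuccAbove (fun _ : Fin (n + 1) => ℝ) 0).setIntegral_preimage_emb
      (MeasurableEquiv.piFinSuccAbove (fun _ : Fin (n + 1) => ℝ) 0).measurableEmbedding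
      (fun p => g p.1) T
  have step3 : ∫ p in T, g p.1 = ∫ t in Set.Icc 0 b, g t := by
    rw [hT, MeasureTheory.Measure.volume_eq_prod]
    have : ∀ p : ℝ × (Fin n → ℝ), g p.1 = g p.1 * (fun _ : Fin n → ℝ => (1:ℂ)) p.2 := by
      intro p; simp
    rw [show (fun p : ℝ × (Fin n → ℝ) => g p.1) = fun p => g p.1 * (fun _ => (1:ℂ)) p.2 from
      funext this]
    rw [setIntegral_prod_mul g (fun _ => (1:ℂ)) (Set.Icc 0 b) (Set.univ.pi fun _ : Fin n => Set.Icc (0:ℝ) 1)]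
    rw [setIntegral_const]
    rw [measureReal_def, volume_pi_pi]
    simp [Real.volume_Icc]
  rw [step1, step2, step3]

/-- Shift property of distance zeta functions.  Let `L = (ℓ_j)` be a bounded fractal
string with canonical geometric realization `A_L = {a_k := Σ_{j≥k} ℓ_j}` and let
`N = n + 1 ≥ 2`, `δ > ℓ_0/2`.  With `A' := A_L × [0,1]^{N−1} ⊆ ℝ^N` and
`V₁ := [0, a_0] × [0,1]^{N−1}`, for all `s` with `Re s > N − 1 + D(ζ_L)` one has
`∫_{V₁} d(x,A')^{s−N} dx = (2^{N−s}/(s − N + 1)) ζ_L(s − N + 1)`. -/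
theorem distance_zeta_shift (ℓ : ℕ → ℝ) (hpos : ∀ j, 0 < ℓ j) (hanti : Antitone ℓ)
    (hsum : Summable ℓ) (n : ℕ) (hn : 1 ≤ n) (δ : ℝ) (hδ : ℓ 0 / 2 < δ)
    (a : ℕ → ℝ) (ha : ∀ k, a k = ∑' j, ℓ (j + k))
    (A' : Set (EuclideanSpace ℝ (Fin (n + 1))))
    (hA' : A' = {x | (∃ k, x 0 = a k) ∧ ∀ i, i ≠ 0 → x i ∈ Icc (0 : ℝ) 1})
    (V₁ : Set (EuclideanSpace ℝ (Fin (n + 1))))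
    (hV₁ : V₁ = {x | x 0 ∈ Icc 0 (a 0) ∧ ∀ i, i ≠ 0 → x i ∈ Icc (0 : ℝ) 1})
    (s : ℂ) (hs : (n : ℝ) + sInf {α : ℝ | Summable fun j => ℓ j ^ α} < s.re) :
    ∫ x in V₁, ((Metric.infDist x A' : ℝ) : ℂ) ^ (s - (n + 1))
      = (2 : ℂ) ^ (((n : ℂ) + 1) - s) / (s - (n + 1) + 1) *
          ∑' j : ℕ, ((ℓ j : ℝ) : ℂ) ^ (s - (n + 1) + 1) := by
  classical
  -- properties of the sequence a
  have hsummk : ∀ k, Summable fun j => ℓ (j + k) := fun k => (summable_nat_add_iff k).2 hsum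
  have hrec : ∀ k, a k = ℓ k + a (k + 1) := by
    intro k
    rw [ha, ha, Summable.tsum_eq_zero_add (hsummk k)]
    congr 1
    · exact congrArg ℓ (by omega)
    · exact tsum_congr fun j => congrArg ℓ (by omega)
  have hapos : ∀ k, 0 < a k := fun k =>
    (ha k) ▸ Summable.tsum_pos (hsummk k) (fun j => (hpos _).le) 0 (hpos _)
  have hstrict : StrictAnti a := strictAnti_nat_of_succ_lt fun k => by
    have := hrec k; have := hpos k; linarith
  have hlt : ∀ k, a (k + 1) < a k := fun k => hstrict (Nat.lt_succ_self k)
  have hℓk : ∀ k, a k - a (k + 1) = ℓ k := fun k => by have := hrec k; linarith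
  have hlim : Filter.Tendsto a Filter.atTop (nhds 0) := by
    have h := tendsto_sum_nat_add ℓ
    have hfa : a = fun i => ∑' k, ℓ (k + i) := funext ha
    rw [hfa]; exact h
  -- dimension / summability facts
  set S : Set ℝ := {α : ℝ | Summable fun j => ℓ j ^ α} with hSdef
  have hS1 : (1 : ℝ) ∈ S := by
    simp only [hSdef, Set.mem_setOf_eq, Real.rpow_one]; exact hsum
  have hsmall : ∀ᶠ j in Filter.atTop, ℓ j < 1 :=
    hsum.tendsto_atTop_zero.eventually_lt_const one_pos
  have hSpos : ∀ α ∈ S, 0 < α := by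
    intro α hα
    by_contra hle
    push_neg at hle
    have h0 : Filter.Tendsto (fun j => ℓ j ^ α) Filter.atTop (nhds 0) :=
      hα.tendsto_atTop_zero
    have h1 : ∀ᶠ j in Filter.atTop, (1 : ℝ) ≤ ℓ j ^ α := by
      filter_upwards [hsmall] with j hj
      calc (1 : ℝ) = ℓ j ^ (0 : ℝ) := (Real.rpow_zero _).symm
        _ ≤ ℓ j ^ α := Real.rpow_le_rpow_of_exponent_ge (hpos j) hj.le hle
    have h2 : ∀ᶠ j in Filter.atTop, ℓ j ^ α < 1 := h0.eventually_lt_const one_pos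
    obtain ⟨j, hj1, hj2⟩ := (h1.and h2).exists
    linarith
  set β : ℝ := s.re - n with hβdef
  have hβinf : sInf S < β := by rw [hβdef]; linarith
  obtain ⟨α, hαS, hαβ⟩ : ∃ α ∈ S, α < β := by
    by_contra hc
    push_neg at hc
    exact absurd (le_csInf ⟨1, hS1⟩ hc) (not_le.2 hβinf)
  have hβpos : 0 < β := (hSpos α hαS).trans hαβ
  have hβsum : Summable fun k => ℓ k ^ β := by
    obtain ⟨M, hM⟩ := Filter.eventually_atTop.1 hsmall
    have h1 : Summable fun k => ℓ (k + M) ^ α := (summable_nat_add_iff M).2 hαS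
    have h2 : Summable fun k => ℓ (k + M) ^ β := by
      refine Summable.of_nonneg_of_le (fun k => (Real.rpow_pos_of_pos (hpos _) _).le)
        (fun k => Real.rpow_le_rpow_of_exponent_ge (hpos _) (hM _ (Nat.le_add_left M k)).le
          hαβ.le) h1
    exact (summable_nat_add_iff M).1 h2
  -- exponent bookkeeping
  set r : ℂ := s - (↑n + 1) with hrdef
  have hrre : r.re = s.re - (n + 1 : ℝ) := by
    simp [hrdef, Complex.sub_re, Complex.add_re]
  have hr1re : (r + 1).re = β := by
    simp only [Complex.add_re, Complex.one_re, hrre, hβdef]; ring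
  have hr1 : (-1 : ℝ) < r.re := by rw [hrre]; rw [hβdef] at hβpos; push_cast; linarith
  have hr10 : r + 1 ≠ 0 := fun h => by
    rw [h] at hr1re; simp at hr1re; exact absurd hr1re.symm (ne_of_gt hβpos)
  -- the one-dimensional function
  set G : ℝ → ℂ := fun t => ((Metric.infDist t (Set.range a) : ℝ) : ℂ) ^ r with hGdef
  -- reduce the Euclidean integral to a 1-D integral
  have hV₁meas : MeasurableSet V₁ := by
    rw [hV₁]
    have : {x : EuclideanSpace ℝ (Fin (n + 1)) |
          x 0 ∈ Icc 0 (a 0) ∧ ∀ i, i ≠ 0 → x i ∈ Icc (0 : ℝ) 1}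
        = ((fun x : EuclideanSpace ℝ (Fin (n + 1)) => x 0) ⁻¹' Icc 0 (a 0)) ∩
          (⋂ i, ⋂ (_ : i ≠ 0), (fun x : EuclideanSpace ℝ (Fin (n + 1)) => x i) ⁻¹' Icc 0 1) := by
      ext x; simp [Set.mem_iInter]
    rw [this]
    exact ((by fun_prop : Measurable fun x : EuclideanSpace ℝ (Fin (n + 1)) => x 0) measurableSet_Icc).inter
      (MeasurableSet.iInter fun i => MeasurableSet.iInter fun _ =>
        (by fun_prop : Measurable fun x : EuclideanSpace ℝ (Fin (n + 1)) => x i) measurableSet_Icc)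
  have hcongr1 : ∫ x in V₁, ((Metric.infDist x A' : ℝ) : ℂ) ^ (s - (↑n + 1))
      = ∫ x in V₁, G (x 0) := by
    refine setIntegral_congr_fun hV₁meas fun x hx => ?_
    rw [hV₁] at hx
    have := infDist_eq_of_lateral a x hx.2
    rw [hGdef]
    simp only [← hrdef]
    rw [hA', this]
  have hred : ∫ x in V₁, G (x 0) = ∫ t in Set.Icc 0 (a 0), G t := by
    rw [hV₁]; exact euclidean_reduction G (a 0)
  -- decompose (0, a 0] into the intervals (a (k+1), a k]
  have hcover : (⋃ k, Set.Ioc (a (k + 1)) (a k)) = Set.Ioc 0 (a 0) := by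
    ext t
    simp only [Set.mem_iUnion, Set.mem_Ioc]
    constructor
    · rintro ⟨k, h1, h2⟩
      exact ⟨(hapos (k + 1)).trans h1, h2.trans (hstrict.antitone (Nat.zero_le k))⟩
    · rintro ⟨h1, h2⟩
      have hex : ∃ k, a k < t := (hlim.eventually_lt_const h1).exists
      have hK0 : Nat.find hex ≠ 0 := by
        intro h0
        have := Nat.find_spec hex
        rw [h0] at this
        linarith
      obtain ⟨m, hm⟩ := Nat.exists_eq_succ_of_ne_zero hK0
      refine ⟨m, ?_, ?_⟩
      · have := Nat.find_spec hex; rwa [hm] at this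
      · have := Nat.find_min hex (by omega : m < Nat.find hex); linarith
  have hdisj : Pairwise (Function.onFun Disjoint fun k => Set.Ioc (a (k + 1)) (a k)) := by
    intro k l hkl
    rcases hkl.lt_or_gt with h | h
    · refine Set.disjoint_left.2 fun t h1 h2 => ?_
      have h3 : a l ≤ a (k + 1) := hstrict.antitone (by omega : k + 1 ≤ l)
      have := h1.1; have := h2.2; linarith
    · refine Set.disjoint_left.2 fun t h1 h2 => ?_
      have h3 : a k ≤ a (l + 1) := hstrict.antitone (by omega : l + 1 ≤ k)
      have := h1.2; have := h2.1; linarith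
  have hgap : ∀ k, ∀ y ∈ Set.range a, y ≤ a (k + 1) ∨ a k ≤ y := by
    rintro k y ⟨m, rfl⟩
    rcases le_or_gt m k with h | h
    · exact Or.inr (hstrict.antitone h)
    · exact Or.inl (hstrict.antitone (by omega : k + 1 ≤ m))
  have hEq : ∀ k, Set.EqOn (fun t => ((min (t - a (k + 1)) (a k - t) : ℝ) : ℂ) ^ r) G
      (Set.Ioc (a (k + 1)) (a k)) := by
    intro k t ht
    show ((min (t - a (k + 1)) (a k - t) : ℝ) : ℂ) ^ r
      = ((Metric.infDist t (Set.range a) : ℝ) : ℂ) ^ r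
    rw [infDist_interval (Set.mem_range_self (k + 1)) (Set.mem_range_self k) (hgap k)
      (Set.Ioc_subset_Icc_self ht)]
  have hIntk : ∀ k, IntegrableOn G (Set.Ioc (a (k + 1)) (a k)) := fun k =>
    (min_cpow_integrableOn (hlt k) hr1).congr_fun (hEq k) measurableSet_Ioc
  -- norm integrals and summability
  have h2β : (0 : ℝ) < 2 ^ β := Real.rpow_pos_of_pos two_pos β
  have hnormk : ∀ k, ∫ t in Set.Ioc (a (k + 1)) (a k), ‖G t‖
      = 2 / (2 ^ β * β) * ℓ k ^ β := by
    intro k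
    have hmin : ∀ t ∈ Set.Ioo (a (k + 1)) (a k),
        ‖G t‖ = (min (t - a (k + 1)) (a k - t)) ^ (r.re) := by
      intro t ht
      have hd : Metric.infDist t (Set.range a)
          = min (t - a (k + 1)) (a k - t) :=
        infDist_interval ⟨k + 1, rfl⟩ ⟨k, rfl⟩ (hgap k) (Set.Ioo_subset_Icc_self ht)
      have hminpos : 0 < min (t - a (k + 1)) (a k - t) :=
        lt_min (by linarith [ht.1]) (by linarith [ht.2])
      show ‖((Metric.infDist t (Set.range a) : ℝ) : ℂ) ^ r‖ = _
      rw [hd, Complex.norm_cpow_eq_rpow_re_of_pos hminpos]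
    calc ∫ t in Set.Ioc (a (k + 1)) (a k), ‖G t‖
        = ∫ t in Set.Ioo (a (k + 1)) (a k), ‖G t‖ := integral_Ioc_eq_integral_Ioo
      _ = ∫ t in Set.Ioo (a (k + 1)) (a k), (min (t - a (k + 1)) (a k - t)) ^ (r.re) :=
          setIntegral_congr_fun measurableSet_Ioo hmin
      _ = ∫ t in Set.Ioc (a (k + 1)) (a k), (min (t - a (k + 1)) (a k - t)) ^ (r.re) :=
          integral_Ioc_eq_integral_Ioo.symm
      _ = 2 * ((a k - a (k + 1)) / 2) ^ (r.re + 1) / (r.re + 1) :=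
          min_rpow_integral (hlt k) hr1
      _ = 2 / (2 ^ β * β) * ℓ k ^ β := by
          rw [hℓk k]
          have : r.re + 1 = β := by rw [hrre, hβdef]; push_cast; ring
          rw [this, Real.div_rpow (hpos k).le (by norm_num : (0:ℝ) ≤ 2)]
          field_simp
  have hsummable : Summable fun k => ∫ t in Set.Ioc (a (k + 1)) (a k), ‖G t‖ :=
    ((hβsum.mul_left (2 / (2 ^ β * β))).congr fun k => (hnormk k).symm)
  have hIntU : IntegrableOn G (⋃ k, Set.Ioc (a (k + 1)) (a k)) :=
    integrableOn_iUnion_of_summable_integral_norm hIntk hsummable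
  -- put everything together
  have hvalk : ∀ k, ∫ t in Set.Ioc (a (k + 1)) (a k), G t
      = 2 * (((ℓ k) / 2 : ℝ) : ℂ) ^ (r + 1) / (r + 1) := by
    intro k
    rw [← setIntegral_congr_fun measurableSet_Ioc (hEq k), min_cpow_integral (hlt k) hr1, hℓk k]
  have hfinal : ∀ k, 2 * (((ℓ k) / 2 : ℝ) : ℂ) ^ (r + 1) / (r + 1)
      = (2 : ℂ) ^ ((↑n + 1) - s) / (r + 1) * ((ℓ k : ℝ) : ℂ) ^ (r + 1) := by
    intro k
    have harg : (2 : ℂ).arg ≠ Real.pi := by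
      rw [show (2 : ℂ) = ((2 : ℝ) : ℂ) by norm_num,
        Complex.arg_ofReal_of_nonneg (by norm_num : (0:ℝ) ≤ 2)]
      exact (Real.pi_ne_zero).symm
    have h2 : (2 : ℂ) ≠ 0 := two_ne_zero
    have hsplit : (((ℓ k) / 2 : ℝ) : ℂ) ^ (r + 1)
        = ((ℓ k : ℝ) : ℂ) ^ (r + 1) * ((2 : ℂ) ^ (r + 1))⁻¹ := by
      rw [show ((ℓ k) / 2 : ℝ) = ℓ k * (2⁻¹ : ℝ) by ring, Complex.ofReal_mul,
        Complex.mul_cpow_ofReal_nonneg (hpos k).le (by norm_num : (0:ℝ) ≤ 2⁻¹)]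
      congr 1
      rw [show (((2:ℝ)⁻¹ : ℝ) : ℂ) = (2 : ℂ)⁻¹ by push_cast; ring]
      exact Complex.inv_cpow 2 (r + 1) harg
    rw [hsplit]
    have hexp : (2 : ℂ) ^ ((↑n + 1) - s) = 2 * ((2 : ℂ) ^ (r + 1))⁻¹ := by
      rw [← Complex.cpow_neg]
      rw [show ((↑n + 1 : ℂ) - s) = 1 + -(r + 1) by rw [hrdef]; ring]
      rw [Complex.cpow_add _ _ h2, Complex.cpow_one]
    rw [hexp]
    ring
  calc ∫ x in V₁, ((Metric.infDist x A' : ℝ) : ℂ) ^ (s - (↑n + 1))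
      = ∫ t in Set.Icc 0 (a 0), G t := by rw [hcongr1, hred]
    _ = ∫ t in Set.Ioc 0 (a 0), G t := integral_Icc_eq_integral_Ioc
    _ = ∫ t in ⋃ k, Set.Ioc (a (k + 1)) (a k), G t := by rw [hcover]
    _ = ∑' k, ∫ t in Set.Ioc (a (k + 1)) (a k), G t :=
        integral_iUnion (fun k => measurableSet_Ioc) hdisj (hcover ▸ hIntU)
    _ = ∑' k, (2 : ℂ) ^ ((↑n + 1) - s) / (r + 1) * ((ℓ k : ℝ) : ℂ) ^ (r + 1) := by
        exact tsum_congr fun k => by rw [hvalk k, hfinal k]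
    _ = (2 : ℂ) ^ ((↑n + 1) - s) / (s - (↑n + 1) + 1) *
          ∑' j : ℕ, ((ℓ j : ℝ) : ℂ) ^ (s - (↑n + 1) + 1) := by
        rw [tsum_mul_left, hrdef]
end
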